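/- Let D_n(q) be the Bressoud polynomials, defined by D_0(q)=1, D_1(q)=1+q, and D_n(q) = (1+q−q^n+q^{2n−1})D_{n−1}(q) − q(1−q^{n−1})D_{n−2}(q). Then for every n ≥ 0, D_n(q) = Σ_{k=0}^{n} q^{k²} C(n,k)_q, where C(n,k)_q is the q-binomial coefficient. -/
import Mathlib


open Polynomial

/-- The `q`-binomial (Gaussian binomial) coefficient `C(n,k)_q` as a polynomial
in `ℤ[q]`, via the Pascal-type recurrence `C(n+1,k+1)_q = q^(k+1) C(n,k+1)_q + C(n,k)_q`. -/
noncomputable def qBinom : ℕ → ℕ → Polynomial ℤ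
  | _, 0 => 1
  | 0, _ + 1 => 0
  | n + 1, k + 1 => qBinom n (k + 1) * X ^ (k + 1) + qBinom n k

/-- The Bressoud polynomials `D_n(q)`. -/
noncomputable def bressoudD : ℕ → Polynomial ℤ
  | 0 => 1
  | 1 => 1 + X
  | n + 2 => (1 + X - X ^ (n + 2) + X ^ (2 * (n + 2) - 1)) * bressoudD (n + 1)
      - X * (1 - X ^ (n + 1)) * bressoudD n

lemma qBinom_zero (n : ℕ) : qBinom n 0 = 1 := by cases n <;> rfl

lemma qBinom_succ (n k : ℕ) :
    qBinom (n+1) (k+1) = qBinom n (k + 1) * X ^ (k + 1) + qBinom n k := rfl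

lemma qBinom_eq_zero : ∀ {n k : ℕ}, n < k → qBinom n k = 0 := by
  intro n
  induction n with
  | zero => intro k h; cases k with
    | zero => omega
    | succ k => rfl
  | succ n ih =>
    intro k h
    cases k with
    | zero => omega
    | succ k =>
      rw [qBinom_succ, ih (by omega), ih (by omega)]
      ring

lemma qBinom_one (n : ℕ) : qBinom n 1 = ∑ i ∈ Finset.range n, X ^ i := by
  induction n with
  | zero => simp [qBinom]
  | succ n ih =>
    rw [show (1:ℕ) = 0 + 1 from rfl, qBinom_succ, ih, qBinom_zero,
      Finset.sum_range_succ']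
    rw [Finset.sum_mul]
    simp [pow_succ]

lemma qBinom_self (n : ℕ) : qBinom n n = 1 := by
  induction n with
  | zero => rfl
  | succ n ih => rw [qBinom_succ, ih, qBinom_eq_zero (Nat.lt_succ_self n)]; ring

lemma qBinom_pascal2 : ∀ (n k : ℕ),
    qBinom (n+1) (k+1) = qBinom n (k+1) + X ^ (n - k) * qBinom n k := by
  intro n
  induction n with
  | zero =>
    intro k
    cases k with
    | zero => simp [qBinom_succ, qBinom_zero, qBinom_eq_zero]
    | succ k => simp [qBinom_succ, qBinom_eq_zero]
  | succ n ih =>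
    intro k
    cases k with
    | zero =>
      rw [qBinom_succ, qBinom_zero, qBinom_one, Nat.sub_zero, mul_one,
        ← Finset.sum_range_succ (fun i => (X:Polynomial ℤ) ^ i) (n+1),
        Finset.sum_range_succ' (fun i => (X:Polynomial ℤ) ^ i) (n+1), Finset.sum_mul]
      simp [pow_succ]
    | succ k =>
      rcases lt_trichotomy k n with h | h | h
      · rw [qBinom_succ (n+1) (k+1)]
        nth_rewrite 1 [ih (k+1)]
        rw [qBinom_succ n (k+1)]
        nth_rewrite 1 [ih k]
        rw [qBinom_succ n k]
        obtain ⟨m, rfl⟩ := Nat.exists_eq_add_of_le h.le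
        have e1 : k + m - (k+1) = m - 1 := by omega
        have e2 : k + m - k = m := by omega
        have e3 : k + m + 1 - (k+1) = m := by omega
        rw [e1, e2, e3]
        obtain ⟨p, rfl⟩ : ∃ p, m = p + 1 := ⟨m - 1, by omega⟩
        have e4 : p + 1 - 1 = p := by omega
        rw [e4]
        ring
      · subst h
        rw [qBinom_self, qBinom_eq_zero (by omega : k + 1 < k + 2),
          Nat.sub_self, pow_zero, qBinom_self]
        ring
      · rw [qBinom_eq_zero (by omega : n + 2 < k + 2),
          qBinom_eq_zero (by omega : n + 1 < k + 2),
          qBinom_eq_zero (by omega : n + 1 < k + 1)]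
        ring

noncomputable def qS (j n : ℕ) : Polynomial ℤ :=
  ∑ k ∈ Finset.range (n + 1), X ^ (k ^ 2 + j * k) * qBinom n k

lemma qS_shift (j n : ℕ) :
    (∑ k ∈ Finset.range (n + 1), X ^ ((k+1) ^ 2 + j * (k+1)) * qBinom n (k+1)) + 1
      = qS j n := by
  rw [qS, Finset.sum_range_succ' (fun k => X ^ (k ^ 2 + j * k) * qBinom n k) n]
  rw [Finset.sum_range_succ (fun k => X ^ ((k+1) ^ 2 + j * (k+1)) * qBinom n (k+1)) n,
    qBinom_eq_zero (Nat.lt_succ_self n), qBinom_zero]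
  ring

lemma qS_A (j n : ℕ) : qS j (n+1) = qS j n + X ^ (n + j + 1) * qS (j+1) n := by
  rw [qS, Finset.sum_range_succ' (fun k => X ^ (k ^ 2 + j * k) * qBinom (n+1) k) (n+1)]
  simp only [qBinom_pascal2, qBinom_zero]
  have : ∀ k ∈ Finset.range (n+1),
      X ^ ((k+1) ^ 2 + j * (k+1)) * (qBinom n (k+1) + X ^ (n - k) * qBinom n k)
        = X ^ ((k+1) ^ 2 + j * (k+1)) * qBinom n (k+1)
          + X ^ (n + j + 1) * (X ^ (k ^ 2 + (j+1) * k) * qBinom n k) := by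
    intro k hk
    rw [Finset.mem_range] at hk
    obtain ⟨m, rfl⟩ := Nat.exists_eq_add_of_le (Nat.lt_succ_iff.mp hk)
    have e : k + m - k = m := by omega
    rw [e]
    ring
  rw [Finset.sum_congr rfl this, Finset.sum_add_distrib, ← Finset.mul_sum]
  have h0 : (X:Polynomial ℤ) ^ (0^2 + j*0) * 1 = 1 := by norm_num
  rw [h0, add_right_comm, qS_shift]
  rfl

lemma qS_B (j n : ℕ) : qS j (n+1) = qS (j+1) n + X ^ (j+1) * qS (j+2) n := by
  rw [qS, Finset.sum_range_succ' (fun k => X ^ (k ^ 2 + j * k) * qBinom (n+1) k) (n+1)]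
  simp only [qBinom_succ, qBinom_zero]
  have : ∀ k ∈ Finset.range (n+1),
      X ^ ((k+1) ^ 2 + j * (k+1)) * (qBinom n (k+1) * X ^ (k+1) + qBinom n k)
        = X ^ ((k+1) ^ 2 + (j+1) * (k+1)) * qBinom n (k+1)
          + X ^ (j + 1) * (X ^ (k ^ 2 + (j+2) * k) * qBinom n k) := by
    intro k _
    ring
  rw [Finset.sum_congr rfl this, Finset.sum_add_distrib, ← Finset.mul_sum]
  have h0 : (X:Polynomial ℤ) ^ (0^2 + j*0) * 1 = 1 := by norm_num
  rw [h0, add_right_comm, qS_shift]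
  rfl

/-- Bressoud's identity: `D_n(q) = Σ_{k=0}^n q^{k²} C(n,k)_q` in `ℤ[q]`. -/
theorem statement7 (n : ℕ) :
    bressoudD n = ∑ k ∈ Finset.range (n + 1), X ^ (k ^ 2) * qBinom n k := by
  have key : ∀ m, (∑ k ∈ Finset.range (m + 1), (X:Polynomial ℤ) ^ (k ^ 2) * qBinom m k) = qS 0 m := by
    intro m
    rw [qS]
    simp
  rw [key]
  induction n using Nat.twoStepInduction with
  | zero => simp [bressoudD, qS, qBinom]
  | one =>
    rw [bressoudD, qS]
    simp [Finset.sum_range_succ, qBinom_succ, qBinom_zero, qBinom]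
  | more n ih1 ih2 =>
    rw [bressoudD, ih1, ih2]
    have e : 2 * (n + 2) - 1 = 2 * n + 3 := by omega
    rw [e]
    have h1 : qS 0 (n+2) = qS 0 (n+1) + X ^ (n+2) * qS 1 (n+1) := by
      have := qS_A 0 (n+1); simpa using this
    have h2 : qS 1 (n+1) = qS 1 n + X ^ (n+2) * qS 2 n := by
      have := qS_A 1 n; simpa [add_right_comm] using this
    have h3 : qS 0 (n+1) = qS 0 n + X ^ (n+1) * qS 1 n := by
      have := qS_A 0 n; simpa using this
    have h4 : qS 0 (n+1) = qS 1 n + X ^ 1 * qS 2 n := by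
      have := qS_B 0 n; simpa using this
    linear_combination -h1 - X^(n+2)*h2 - (X^(n+2) - X)*h3 + X^(2*n+3)*h4
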